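/- Let N be a nonnegative integer, p ∈ (0,1), and let a > 1 be a real number. Then Σ_{x=0}^N C(N,x) p^x (1−p)^{N−x} · (−log(1 − 1/(x + a))) = ∫₀^∞ ((e^t − 1)/t) · e^{−at} · (1 − p + p e^{−t})^N dt. -/

import Mathlib

open Finset MeasureTheory

/-- Binomial(N, p) probability mass function at `x`. -/
noncomputable def binPMF (N : ℕ) (q : ℝ) (x : ℕ) : ℝ :=
  (N.choose x : ℝ) * q ^ x * (1 - q) ^ (N - x)

section Aux
open Set Real

lemma exp_iint {c d t : ℝ} (ht : 0 < t) :
    ∫ s in c..d, Real.exp (-(s * t)) = (Real.exp (-(c*t)) - Real.exp (-(d*t))) / t := by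
  have D : ∀ s : ℝ, HasDerivAt (fun y : ℝ => -Real.exp (-(y * t)) / t) (Real.exp (-(s * t))) s := by
    intro s
    have h1 : HasDerivAt (fun y : ℝ => -(y * t)) (-t) s := by
      exact ((hasDerivAt_id s).mul_const t).neg.congr_deriv (by ring)
    have h2 := (h1.exp).neg.div_const t
    refine h2.congr_deriv ?_
    field_simp
  rw [intervalIntegral.integral_eq_sub_of_hasDerivAt (fun s _ => D s)
    ((Real.continuous_exp.comp (by continuity)).intervalIntegrable c d)]
  ring

lemma exp_tail {s : ℝ} (hs : 0 < s) :
    ∫ t in Ioi (0:ℝ), Real.exp (-(s * t)) = 1 / s := by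
  have := MeasureTheory.integral_comp_mul_left_Ioi (fun u => Real.exp (-u)) 0 hs
  simp [integral_exp_neg_Ioi, smul_eq_mul, integral_exp_Iic_zero] at this
  simpa [one_div] using this

lemma frullani_lintegral {c d : ℝ} (hc : 0 < c) (hcd : c ≤ d) :
    ∫⁻ t in Ioi (0:ℝ), ENNReal.ofReal ((Real.exp (-(c*t)) - Real.exp (-(d*t)))/t)
      = ENNReal.ofReal (Real.log d - Real.log c) := by
  have hd : 0 < d := lt_of_lt_of_le hc hcd
  have key1 : ∀ t ∈ Ioi (0:ℝ),
      ENNReal.ofReal ((Real.exp (-(c*t)) - Real.exp (-(d*t)))/t)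
        = ∫⁻ s in Ioc c d, ENNReal.ofReal (Real.exp (-(s*t))) := by
    intro t ht
    rw [← MeasureTheory.ofReal_integral_eq_lintegral_ofReal
      ((Continuous.integrableOn_Ioc (by continuity : Continuous fun s : ℝ => Real.exp (-(s*t)))))
      (Filter.Eventually.of_forall fun s => (Real.exp_pos _).le),
      ← intervalIntegral.integral_of_le hcd, exp_iint ht]
  rw [setLIntegral_congr_fun measurableSet_Ioi key1]
  rw [lintegral_lintegral_swap (by
    apply Measurable.aemeasurable
    apply ENNReal.measurable_ofReal.comp
    exact (Real.continuous_exp.comp (by continuity)).measurable.comp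
      (measurable_snd.neg.mul measurable_fst |>.neg |> fun h => by fun_prop))]
  have key2 : ∀ s ∈ Ioc c d,
      (∫⁻ t in Ioi (0:ℝ), ENNReal.ofReal (Real.exp (-(s*t)))) = ENNReal.ofReal (1/s) := by
    intro s hs
    have hs0 : 0 < s := lt_of_lt_of_le hc hs.1.le
    rw [← MeasureTheory.ofReal_integral_eq_lintegral_ofReal
      (by simpa [neg_mul] using exp_neg_integrableOn_Ioi 0 hs0 :
        IntegrableOn (fun t : ℝ => Real.exp (-(s*t))) (Ioi (0:ℝ)) volume)
      (Filter.Eventually.of_forall fun t => (Real.exp_pos _).le), exp_tail hs0]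
  rw [setLIntegral_congr_fun measurableSet_Ioc key2]
  have hint : IntegrableOn (fun s : ℝ => 1/s) (Ioc c d) := by
    rw [← intervalIntegrable_iff_integrableOn_Ioc_of_le hcd]
    apply intervalIntegral.intervalIntegrable_one_div
    · intro x hx
      rw [Set.uIcc_of_le hcd] at hx
      exact ne_of_gt (lt_of_lt_of_le hc hx.1)
    · exact continuousOn_id
  rw [← MeasureTheory.ofReal_integral_eq_lintegral_ofReal hint
    ((ae_restrict_iff' measurableSet_Ioc).mpr (Filter.Eventually.of_forall
      fun s hs => le_of_lt (by have := lt_of_lt_of_le hc hs.1.le; positivity)))]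
  rw [← intervalIntegral.integral_of_le hcd, integral_one_div_of_pos hc hd,
      Real.log_div hd.ne' hc.ne']

lemma frullani_meas {c d : ℝ} :
    Measurable (fun t : ℝ => (Real.exp (-(c*t)) - Real.exp (-(d*t)))/t) := by fun_prop

lemma frullani_nonneg {c d : ℝ} (hcd : c ≤ d) :
    0 ≤ᵐ[volume.restrict (Ioi (0:ℝ))] fun t => (Real.exp (-(c*t)) - Real.exp (-(d*t)))/t := by
  refine (ae_restrict_iff' measurableSet_Ioi).mpr (Filter.Eventually.of_forall fun t ht => ?_)
  have ht' : (0:ℝ) < t := ht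
  have : Real.exp (-(d*t)) ≤ Real.exp (-(c*t)) := by
    apply Real.exp_le_exp.mpr; nlinarith
  have h2 : 0 ≤ Real.exp (-(c*t)) - Real.exp (-(d*t)) := by linarith
  positivity

lemma frullani_integrableOn {c d : ℝ} (hc : 0 < c) (hcd : c ≤ d) :
    IntegrableOn (fun t => (Real.exp (-(c*t)) - Real.exp (-(d*t)))/t) (Ioi (0:ℝ)) := by
  refine ⟨frullani_meas.aestronglyMeasurable, ?_⟩
  rw [hasFiniteIntegral_iff_ofReal (frullani_nonneg hcd), frullani_lintegral hc hcd]
  exact ENNReal.ofReal_lt_top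

lemma frullani_integral {c d : ℝ} (hc : 0 < c) (hcd : c ≤ d) :
    ∫ t in Ioi (0:ℝ), (Real.exp (-(c*t)) - Real.exp (-(d*t)))/t
      = Real.log d - Real.log c := by
  rw [MeasureTheory.integral_eq_lintegral_of_nonneg_ae (frullani_nonneg hcd)
    frullani_meas.aestronglyMeasurable, frullani_lintegral hc hcd,
    ENNReal.toReal_ofReal]
  have := Real.log_le_log hc hcd
  linarith

end Aux

open Set in
theorem binomial_log_moment_integral (N : ℕ) (p : ℝ) (hp : p ∈ Set.Ioo (0 : ℝ) 1)
    (a : ℝ) (ha : 1 < a) :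
    ∑ x ∈ Finset.range (N+1),
        binPMF N p x * (- Real.log (1 - 1 / ((x : ℝ) + a))) =
      ∫ t in Set.Ioi (0 : ℝ),
        (Real.exp t - 1) / t * Real.exp (-a * t) * (1 - p + p * Real.exp (-t)) ^ N := by
  have hca : ∀ x : ℕ, (0:ℝ) < (x:ℝ) + a - 1 := fun x => by
    have : (0:ℝ) ≤ (x:ℝ) := Nat.cast_nonneg x
    linarith
  have hcd : ∀ x : ℕ, (x:ℝ) + a - 1 ≤ (x:ℝ) + a := fun x => by linarith
  -- rewrite the integrand as a finite sum
  have hEq : Set.EqOn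
      (fun t => (Real.exp t - 1) / t * Real.exp (-a * t) * (1 - p + p * Real.exp (-t)) ^ N)
      (fun t => ∑ x ∈ Finset.range (N+1),
        binPMF N p x * ((Real.exp (-(((x:ℝ)+a-1)*t)) - Real.exp (-(((x:ℝ)+a)*t)))/t))
      (Set.Ioi 0) := by
    intro t ht
    have ht' : (0:ℝ) < t := ht
    simp only
    rw [show (1 - p + p * Real.exp (-t)) = (p * Real.exp (-t) + (1 - p)) by ring,
      add_pow, Finset.mul_sum]
    refine Finset.sum_congr rfl fun x _ => ?_
    have e1 : Real.exp (-(((x:ℝ)+a-1)*t)) = Real.exp t * Real.exp (-a*t) * Real.exp (-t) ^ x := by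
      rw [← Real.exp_nat_mul, ← Real.exp_add, ← Real.exp_add]; ring_nf
    have e2 : Real.exp (-(((x:ℝ)+a)*t)) = Real.exp (-a*t) * Real.exp (-t) ^ x := by
      rw [← Real.exp_nat_mul, ← Real.exp_add]; ring_nf
    rw [e1, e2]
    unfold binPMF
    field_simp
    ring
  rw [setIntegral_congr_fun measurableSet_Ioi hEq]
  rw [MeasureTheory.integral_finset_sum _ (fun x _ =>
    (frullani_integrableOn (hca x) (hcd x)).const_mul _)]
  refine Finset.sum_congr rfl fun x _ => ?_
  rw [integral_const_mul, frullani_integral (hca x) (hcd x)]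
  congr 1
  have hx0 : ((x:ℝ) + a - 1) ≠ 0 := (hca x).ne'
  have hx1 : ((x:ℝ) + a) ≠ 0 := ne_of_gt (by linarith [hca x])
  rw [show 1 - 1/((x:ℝ)+a) = ((x:ℝ)+a-1)/((x:ℝ)+a) by field_simp,
    Real.log_div hx0 hx1]
  ring
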